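/- Let g be a finite-dimensional real Lie algebra equipped with a symplectic form θ. Then there is a unique bilinear map ∇ : g × g → g satisfying θ(∇(X,Y),Z) = −θ(Y,[X,Z]) for all X, Y, Z ∈ g, and this ∇ is an affine structure on g: it satisfies ∇(X,Y) − ∇(Y,X) = [X,Y] and ∇(X,∇(Y,Z)) − ∇(Y,∇(X,Z)) = ∇([X,Y],Z) for all X, Y, Z ∈ g. -/

import Mathlib

/-- Let `g` be a finite-dimensional real Lie algebra with a symplectic form `θ`.
Then there is a unique bilinear map `∇` with `θ(∇(X,Y),Z) = −θ(Y,[X,Z])`, and any such `∇` is an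
affine structure on `g`: `∇(X,Y) − ∇(Y,X) = [X,Y]` and
`∇(X,∇(Y,Z)) − ∇(Y,∇(X,Z)) = ∇([X,Y],Z)`. -/
theorem symplectic_affine_structure_exists_unique
    (L : Type*) [LieRing L] [LieAlgebra ℝ L] [FiniteDimensional ℝ L]
    (θ : L →ₗ[ℝ] L →ₗ[ℝ] ℝ)
    (halt : ∀ X : L, θ X X = 0)
    (hnondeg : ∀ X : L, (∀ Y : L, θ X Y = 0) → X = 0)
    (hcocycle : ∀ X Y Z : L, θ ⁅X, Y⁆ Z + θ ⁅Y, Z⁆ X + θ ⁅Z, X⁆ Y = 0) :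
    (∃! D : L →ₗ[ℝ] L →ₗ[ℝ] L, ∀ X Y Z : L, θ (D X Y) Z = -θ Y ⁅X, Z⁆) ∧
      (∀ D : L →ₗ[ℝ] L →ₗ[ℝ] L, (∀ X Y Z : L, θ (D X Y) Z = -θ Y ⁅X, Z⁆) →
        (∀ X Y : L, D X Y - D Y X = ⁅X, Y⁆) ∧
        (∀ X Y Z : L, D X (D Y Z) - D Y (D X Z) = D ⁅X, Y⁆ Z)) := by
  -- skew symmetry
  have hskew : ∀ X Y : L, θ X Y = -θ Y X := by
    intro X Y
    have h := halt (X + Y)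
    simp only [map_add, LinearMap.add_apply, halt] at h
    linarith
  -- separation
  have heq : ∀ A B : L, (∀ Z, θ A Z = θ B Z) → A = B := by
    intro A B h
    have h0 : ∀ Z, θ (A - B) Z = 0 := by
      intro Z
      simp [map_sub, h Z]
    have := hnondeg _ h0
    rwa [sub_eq_zero] at this
  -- θ as a map to the dual is injective
  have hinj : Function.Injective θ := by
    intro A B h
    exact heq A B (fun Z => by rw [h])
  -- hence bijective onto the dual
  let e : L ≃ₗ[ℝ] Module.Dual ℝ L :=
    θ.linearEquivOfInjective hinj Subspace.dual_finrank_eq.symm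
  have he : ∀ (φ : Module.Dual ℝ L) (Z : L), θ (e.symm φ) Z = φ Z := by
    intro φ Z
    have h1 : e (e.symm φ) = θ (e.symm φ) :=
      θ.linearEquivOfInjective_apply hinj Subspace.dual_finrank_eq.symm (e.symm φ)
    rw [← h1, e.apply_symm_apply]
  -- construct D
  let D : L →ₗ[ℝ] L →ₗ[ℝ] L := LinearMap.mk₂ ℝ
    (fun X Y => e.symm (-(θ Y ∘ₗ LieAlgebra.ad ℝ L X)))
    (by
      intro X X' Y
      rw [map_add, LinearMap.comp_add, neg_add, map_add])
    (by
      intro c X Y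
      rw [map_smul, LinearMap.comp_smul, ← smul_neg c (θ Y ∘ₗ LieAlgebra.ad ℝ L X), map_smul])
    (by
      intro X Y Y'
      rw [map_add, LinearMap.add_comp, neg_add, map_add])
    (by
      intro c X Y
      rw [map_smul, LinearMap.smul_comp, ← smul_neg c (θ Y ∘ₗ LieAlgebra.ad ℝ L X), map_smul])
  have hD : ∀ X Y Z : L, θ (D X Y) Z = -θ Y ⁅X, Z⁆ := by
    intro X Y Z
    show θ (e.symm _) Z = _
    rw [he]
    simp [LieAlgebra.ad_apply]
  constructor
  · refine ⟨D, hD, ?_⟩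
    intro D' hD'
    ext X Y
    exact heq _ _ (fun Z => by rw [hD' X Y Z, hD X Y Z])
  · intro D' hD'
    constructor
    · intro X Y
      apply heq
      intro Z
      have h1 := hD' X Y Z
      have h2 := hD' Y X Z
      have hc := hcocycle X Y Z
      have e1 : θ ⁅Y, Z⁆ X = -θ X ⁅Y, Z⁆ := hskew _ _
      have e3 : (⁅Z, X⁆ : L) = -⁅X, Z⁆ := by rw [← lie_skew]
      have e2 : θ ⁅Z, X⁆ Y = θ Y ⁅X, Z⁆ := by
        rw [hskew, e3, map_neg, neg_neg]
      simp only [map_sub, LinearMap.sub_apply, h1, h2]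
      linarith
    · intro X Y Z
      apply heq
      intro W
      have h1 : θ (D' X (D' Y Z)) W = θ Z ⁅Y, ⁅X, W⁆⁆ := by
        rw [hD' X (D' Y Z) W, hD' Y Z ⁅X, W⁆, neg_neg]
      have h2 : θ (D' Y (D' X Z)) W = θ Z ⁅X, ⁅Y, W⁆⁆ := by
        rw [hD' Y (D' X Z) W, hD' X Z ⁅Y, W⁆, neg_neg]
      have h3 : θ (D' ⁅X, Y⁆ Z) W = -θ Z ⁅⁅X, Y⁆, W⁆ := hD' _ _ _
      have hjac : (⁅⁅X, Y⁆, W⁆ : L) = ⁅X, ⁅Y, W⁆⁆ - ⁅Y, ⁅X, W⁆⁆ := lie_lie X Y W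
      simp only [map_sub, LinearMap.sub_apply, h1, h2, h3, hjac]
      ring
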